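/- For every n ≥ 1, the group presented by P_n = ⟨x₁, …, x_n, t | x_{i+1}x_i x_{i+1}⁻¹ = x_i² for 1 ≤ i ≤ n−1, t v_n t⁻¹ = v_n x_n⟩ is isomorphic to ℤ, generated by the image of t, where v_n = [y₁, x₁] with y_n = x_n^n and y_i = y_{i+1} x_i y_{i+1}⁻¹ for i < n. -/

import Mathlib

/-- The `i`-th generator (0-indexed) of the free group on `n` generators,
or `1` if `i` is out of range. -/
def fgen (n i : ℕ) : FreeGroup (Fin n) :=
  if h : i < n then FreeGroup.of ⟨i, h⟩ else 1

/-- The downward recursive sequence: `zseq x n k 0 = x_{n-1}^k` (the top element `y_n`)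
and `zseq x n k (j+1) = zseq x n k j * x (n-2-j) * (zseq x n k j)⁻¹`
(so `zseq x n k j = y_{n-1-j}` where `y_i = y_{i+1} x_i y_{i+1}⁻¹`). -/
def zseq {G : Type} [Group G] (x : ℕ → G) (n k : ℕ) : ℕ → G
  | 0 => x (n - 1) ^ k
  | j + 1 => zseq x n k j * x (n - 2 - j) * (zseq x n k j)⁻¹

/-- g_k = y₁, the iterated conjugation x₁^{x₂^{⋯^{x_n^k}}}. -/
def gElt {G : Type} [Group G] (x : ℕ → G) (n k : ℕ) : G := zseq x n k (n - 1)

open scoped commutatorElement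

/-- The word v_n = [g_n, x₁] in the free group on generators x₁, …, x_n, t
(the first n generators being the x's, the last one being t). -/
def vword (n : ℕ) : FreeGroup (Fin (n + 1)) :=
  ⁅gElt (fgen (n + 1)) n n, fgen (n + 1) 0⁆

/-- The relators of P_n = ⟨x₁, …, x_n, t | x_{i+1} x_i x_{i+1}⁻¹ = x_i² (1 ≤ i ≤ n−1),
t v_n t⁻¹ = v_n x_n⟩.  Generator index n is t. -/
def Prel (n : ℕ) : Set (FreeGroup (Fin (n + 1))) :=
  {w | ∃ i : ℕ, i + 1 < n ∧
      w = fgen (n + 1) (i + 1) * fgen (n + 1) i * (fgen (n + 1) (i + 1))⁻¹ *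
            (fgen (n + 1) i ^ 2)⁻¹} ∪
  {fgen (n + 1) n * vword n * (fgen (n + 1) n)⁻¹ * (vword n * fgen (n + 1) (n - 1))⁻¹}

private lemma conj_pow_eq' {G : Type} [Group G] (a b : G) (h : a * b * a⁻¹ = b ^ 2) :
    ∀ m : ℕ, a ^ m * b * (a ^ m)⁻¹ = b ^ 2 ^ m := by
  intro m
  induction m with
  | zero => simp
  | succ m ih =>
    have step : a ^ (m + 1) * b * (a ^ (m + 1))⁻¹ = a * (a ^ m * b * (a ^ m)⁻¹) * a⁻¹ := by
      rw [pow_succ]; group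
    rw [step, ih, show a * b ^ 2 ^ m * a⁻¹ = (a * b * a⁻¹) ^ 2 ^ m from (conj_pow).symm, h,
      ← pow_mul]
    congr 1
    rw [pow_succ, Nat.mul_comm]

private lemma map_zseq' {G H : Type} [Group G] [Group H] (f : G →* H) (x : ℕ → G)
    (n k : ℕ) : ∀ j, f (zseq x n k j) = zseq (fun i => f (x i)) n k j := by
  intro j
  induction j with
  | zero => simp [zseq]
  | succ j ih => simp [zseq, ih]

/-- The group presented by P_n is infinite cyclic, generated by the image of t. -/
theorem stmt7 (n : ℕ) (hn : 1 ≤ n) :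
    ∃ e : PresentedGroup (Prel n) ≃* Multiplicative ℤ,
      e (PresentedGroup.of ⟨n, n.lt_succ_self⟩) = Multiplicative.ofAdd 1 := by
  classical
  set π : FreeGroup (Fin (n + 1)) →* PresentedGroup (Prel n) := PresentedGroup.mk (Prel n)
    with hπ
  set X : ℕ → PresentedGroup (Prel n) := fun i => π (fgen (n + 1) i) with hX
  have hrel : ∀ r ∈ Prel n, π r = 1 := by
    intro r hr
    exact (QuotientGroup.eq_one_iff r).mpr (Subgroup.subset_normalClosure hr)
  have hR1 : ∀ i, i + 1 < n → X (i + 1) * X i * (X (i + 1))⁻¹ = X i ^ 2 := by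
    intro i hi
    have h := hrel _ (Or.inl ⟨i, hi, rfl⟩)
    simp only [map_mul, map_inv, map_pow] at h
    have h2 := mul_eq_one_iff_eq_inv.mp h
    simpa [hX] using h2
  have hV : π (vword n) = ⁅zseq X n n (n - 1), X 0⁆ := by
    simp only [vword, gElt, map_commutatorElement, map_zseq']
    rfl
  have hpow : ∀ j, j ≤ n - 1 → ∃ m : ℕ, zseq X n n j = X (n - 1 - j) ^ m := by
    intro j
    induction j with
    | zero => exact fun _ => ⟨n, by simp [zseq]⟩
    | succ j ih =>
      intro hj
      obtain ⟨m, hm⟩ := ih (by omega)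
      have hidx : n - 2 - j + 1 = n - 1 - j := by omega
      have hconj := conj_pow_eq' (X (n - 1 - j)) (X (n - 2 - j))
        (by rw [← hidx]; exact hR1 _ (by omega)) m
      refine ⟨2 ^ m, ?_⟩
      have hz : zseq X n n (j + 1) = zseq X n n j * X (n - 2 - j) * (zseq X n n j)⁻¹ := rfl
      rw [hz, hm, hconj]
      congr 2
      omega
  have hVone : π (vword n) = 1 := by
    obtain ⟨m, hm⟩ := hpow (n - 1) le_rfl
    rw [hV, hm, show n - 1 - (n - 1) = 0 from by omega]
    exact commutatorElement_eq_one_iff_commute.mpr ((Commute.refl (X 0)).pow_left m)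
  have hXn1 : X (n - 1) = 1 := by
    have h := hrel _ (Or.inr rfl)
    simp only [map_mul, map_inv, hVone] at h
    rw [inv_eq_one.symm]
    calc (X (n - 1))⁻¹
        = π (fgen (n + 1) n) * 1 * (π (fgen (n + 1) n))⁻¹ * (1 * π (fgen (n + 1) (n - 1)))⁻¹ := by
          group
          rfl
      _ = 1 := h
  have hXdown : ∀ j, j < n → X (n - 1 - j) = 1 := by
    intro j
    induction j with
    | zero => exact fun _ => hXn1
    | succ j ih =>
      intro hj
      have h1 : X (n - 1 - j) = 1 := ih (by omega)
      have hidx : n - 2 - j + 1 = n - 1 - j := by omega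
      have hr := hR1 (n - 2 - j) (by omega)
      rw [hidx, h1] at hr
      simp only [one_mul, inv_one, mul_one] at hr
      have hx1 : X (n - 2 - j) = 1 := by
        rw [pow_two] at hr
        exact (mul_left_cancel (a := X (n - 2 - j))
          (show X (n - 2 - j) * 1 = X (n - 2 - j) * X (n - 2 - j) by
            rw [mul_one]; exact hr)).symm
      rw [show n - 1 - (j + 1) = n - 2 - j from by omega]
      exact hx1
  have hXall : ∀ i, i < n → X i = 1 := by
    intro i hi
    have := hXdown (n - 1 - i) (by omega)
    rwa [show n - 1 - (n - 1 - i) = i from by omega] at this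
  -- the homomorphism to ℤ
  set f : Fin (n + 1) → Multiplicative ℤ :=
    fun i => if (i : ℕ) = n then Multiplicative.ofAdd 1 else 1 with hf
  have hfgen : ∀ i : ℕ, i < n → FreeGroup.lift f (fgen (n + 1) i) = 1 := by
    intro i hi
    rw [fgen, dif_pos (by omega)]
    simp [hf, Nat.ne_of_lt hi]
  have hftn : FreeGroup.lift f (fgen (n + 1) n) = Multiplicative.ofAdd 1 := by
    rw [fgen, dif_pos n.lt_succ_self]
    simp [hf]
  have hfv : FreeGroup.lift f (vword n) = 1 := by
    rw [vword, map_commutatorElement]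
    exact commutatorElement_eq_one_iff_commute.mpr (Commute.all _ _)
  have hfrel : ∀ r ∈ Prel n, FreeGroup.lift f r = 1 := by
    rintro r (⟨i, hi, rfl⟩ | hr)
    · simp only [map_mul, map_inv, map_pow, hfgen i (by omega), hfgen (i + 1) hi]
      simp
    · rw [Set.mem_singleton_iff.mp hr]
      simp only [map_mul, map_inv, hfv, hfgen (n - 1) (by omega), hftn]
      group
  set φ : PresentedGroup (Prel n) →* Multiplicative ℤ := PresentedGroup.toGroup hfrel with hφ
  set ψ : Multiplicative ℤ →* PresentedGroup (Prel n) :=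
    zpowersHom _ (PresentedGroup.of ⟨n, n.lt_succ_self⟩) with hψ
  have hφt : φ (PresentedGroup.of ⟨n, n.lt_succ_self⟩) = Multiplicative.ofAdd 1 := by
    rw [hφ, PresentedGroup.toGroup.of]
    simp [hf]
  have hofX : ∀ (i : ℕ) (h : i < n + 1),
      (PresentedGroup.of ⟨i, h⟩ : PresentedGroup (Prel n)) = X i := by
    intro i h
    simp only [hX, fgen, dif_pos h]
    rfl
  have h1 : ψ.comp φ = MonoidHom.id _ := by
    ext ⟨i, hi⟩
    simp only [MonoidHom.comp_apply, MonoidHom.id_apply]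
    by_cases hin : i = n
    · subst hin
      rw [hφt, hψ]
      simp
    · have hiltn : i < n := by omega
      rw [hofX i hi, hXall i hiltn]
      simp
  have h2 : φ.comp ψ = MonoidHom.id _ := by
    apply MonoidHom.ext_mint
    simp only [MonoidHom.comp_apply, MonoidHom.id_apply, hψ]
    simpa using hφt
  exact ⟨MonoidHom.toMulEquiv φ ψ h1 h2, hφt⟩
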